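/- Let u be a C² solution of u'' + ((N-1)/r)u' + f(u) = 0 on (0,∞) with f continuous, F(s) = ∫₀ˢ f(t)dt, I(r) = |u'(r)|²/2 + F(u(r)), and H(r) = r^{2(N-1)} I(r). Suppose u is monotone decreasing on [r₁, z₁] with u(r₁) = β₁ > 0, u(z₁) = 0, F(s) ≤ 0 for s ∈ [0, β₁], and |u'(r)| ≤ K on [r₁, z₁]. Then H(z₁) ≤ r₁^{2N-3} ( r₁ I(r₁) - (2(N-1)/K) ∫₀^{β₁} |F(s)| ds ). -/

import Mathlib

open Set

/-- Weighted energy drop across the interval where u decreases from β₁ to 0: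
H(z₁) ≤ r₁^{2N-3}( r₁ I(r₁) - (2(N-1)/K) ∫₀^{β₁} |F(s)| ds ). -/
theorem weighted_energy_drop
    (N : ℕ) (hN : 2 ≤ N) (f : ℝ → ℝ) (hf : Continuous f)
    (r₁ z₁ β₁ K : ℝ) (hr₁ : 0 < r₁) (hr₁z : r₁ < z₁)
    (hβ₁ : 0 < β₁) (hK : 0 < K)
    (u u' : ℝ → ℝ)
    (hu : ∀ r ∈ Icc r₁ z₁, HasDerivAt u (u' r) r)
    (hode : ∀ r ∈ Icc r₁ z₁,
      HasDerivAt u' (-(((N:ℝ) - 1) / r * u' r + f (u r))) r)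
    (hanti : AntitoneOn u (Icc r₁ z₁))
    (hur₁ : u r₁ = β₁) (huz₁ : u z₁ = 0)
    (hFneg : ∀ s ∈ Icc (0:ℝ) β₁, (∫ t in (0:ℝ)..s, f t) ≤ 0)
    (hbound : ∀ r ∈ Icc r₁ z₁, |u' r| ≤ K) :
    z₁ ^ (2 * (N - 1)) * ((u' z₁) ^ 2 / 2 + ∫ t in (0:ℝ)..(u z₁), f t) ≤
      r₁ ^ (2 * N - 3) *
        (r₁ * ((u' r₁) ^ 2 / 2 + ∫ t in (0:ℝ)..(u r₁), f t) -
          2 * ((N:ℝ) - 1) / K * ∫ s in (0:ℝ)..β₁, |∫ t in (0:ℝ)..s, f t|) := by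
  set F : ℝ → ℝ := fun s => ∫ t in (0:ℝ)..s, f t with hFdef
  have hFd : ∀ x : ℝ, HasDerivAt F (f x) x := fun x =>
    intervalIntegral.integral_hasDerivAt_right (hf.intervalIntegrable 0 x)
      (hf.stronglyMeasurableAtFilter _ _) hf.continuousAt
  have hFcont : Continuous F :=
    Differentiable.continuous (fun x => (hFd x).differentiableAt)
  set G : ℝ → ℝ := fun s => ∫ t in (0:ℝ)..s, |F t| with hGdef
  have hGd : ∀ x : ℝ, HasDerivAt G (|F x|) x := fun x =>
    intervalIntegral.integral_hasDerivAt_right (hFcont.abs.intervalIntegrable 0 x)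
      (hFcont.abs.stronglyMeasurableAtFilter _ _) hFcont.abs.continuousAt
  set n : ℕ := 2 * N - 3 with hn
  have hm : 2 * (N - 1) = n + 1 := by omega
  have hcastn : ((n : ℝ) + 1) = 2 * ((N : ℝ) - 1) := by
    have h3 : (3 : ℕ) ≤ 2 * N := by omega
    have : (n : ℝ) = 2 * (N : ℝ) - 3 := by
      rw [hn]; push_cast [Nat.cast_sub h3]; ring
    rw [this]; ring
  set c : ℝ := 2 * ((N : ℝ) - 1) / K * r₁ ^ n with hc
  have hc0 : 0 ≤ c := by
    apply mul_nonneg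
    · apply div_nonneg _ hK.le
      have : (2 : ℝ) ≤ (N : ℝ) := by exact_mod_cast hN
      linarith
    · positivity
  set Φ : ℝ → ℝ := fun r => r ^ (n + 1) * ((u' r) ^ 2 / 2 + F (u r)) + c * (G β₁ - G (u r))
    with hΦdef
  set D : ℝ → ℝ := fun r =>
    2 * ((N : ℝ) - 1) * r ^ n * F (u r) + c * (|F (u r)| * (-(u' r))) with hDdef
  -- derivative of Φ on the interval
  have hΦd : ∀ r ∈ Icc r₁ z₁, HasDerivAt Φ (D r) r := by
    intro r hr
    have hr0 : (0 : ℝ) < r := lt_of_lt_of_le hr₁ hr.1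
    have h1 : HasDerivAt (fun r : ℝ => r ^ (n + 1)) (((n : ℝ) + 1) * r ^ n) r := by
      simpa using hasDerivAt_pow (n + 1) r
    have h2 : HasDerivAt (fun r => (u' r) ^ 2 / 2)
        ((2 * u' r ^ 1 * (-(((N:ℝ) - 1) / r * u' r + f (u r)))) / 2) r :=
      ((hode r hr).pow 2).div_const 2
    have h3 : HasDerivAt (fun r => F (u r)) (f (u r) * u' r) r :=
      (hFd (u r)).comp r (hu r hr)
    have h4 : HasDerivAt (fun r => G (u r)) (|F (u r)| * u' r) r :=
      (hGd (u r)).comp r (hu r hr)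
    have h5 := (h1.mul (h2.add h3)).add
      (((hasDerivAt_const r (G β₁)).sub h4).const_mul c)
    refine h5.congr_deriv (Eq.symm ?_)
    have hrne : r ≠ 0 := ne_of_gt hr0
    rw [hDdef]
    simp only [Pi.add_apply]
    have hnr : (n : ℝ) = 2 * (N : ℝ) - 3 := by linarith [hcastn]
    rw [hnr]
    field_simp
    ring
  -- sign information
  have humem : ∀ r ∈ Icc r₁ z₁, u r ∈ Icc (0:ℝ) β₁ := by
    intro r hr
    constructor
    · rw [← huz₁]; exact hanti hr (right_mem_Icc.2 hr₁z.le) hr.2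
    · rw [← hur₁]; exact hanti (left_mem_Icc.2 hr₁z.le) hr hr.1
  have hDle : ∀ r ∈ Icc r₁ z₁, D r ≤ 0 := by
    intro r hr
    have hr0 : (0 : ℝ) < r := lt_of_lt_of_le hr₁ hr.1
    have hFle : F (u r) ≤ 0 := hFneg _ (humem r hr)
    have habs : |F (u r)| = -F (u r) := abs_of_nonpos hFle
    have hN2 : (2 : ℝ) ≤ (N : ℝ) := by exact_mod_cast hN
    have hup : -(u' r) ≤ K := by
      have := hbound r hr
      have := neg_abs_le (u' r)
      linarith
    have habs0 : 0 ≤ |F (u r)| := abs_nonneg _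
    have hterm2 : c * (|F (u r)| * (-(u' r))) ≤ 2 * ((N : ℝ) - 1) * r₁ ^ n * |F (u r)| := by
      have h1 : c * (|F (u r)| * (-(u' r))) ≤ c * (|F (u r)| * K) := by
        apply mul_le_mul_of_nonneg_left _ hc0
        exact mul_le_mul_of_nonneg_left hup habs0
      have h2 : c * (|F (u r)| * K) = 2 * ((N : ℝ) - 1) * r₁ ^ n * |F (u r)| := by
        rw [hc]; field_simp
      linarith
    have hpowle : r₁ ^ n ≤ r ^ n := pow_le_pow_left₀ hr₁.le hr.1 n
    have hfinal : 2 * ((N : ℝ) - 1) * r₁ ^ n * |F (u r)| ≤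
        2 * ((N : ℝ) - 1) * r ^ n * |F (u r)| := by
      apply mul_le_mul_of_nonneg_right _ habs0
      apply mul_le_mul_of_nonneg_left hpowle
      linarith
    rw [hDdef]
    simp only
    rw [habs] at *
    nlinarith
  -- Φ is antitone
  have hΦanti : AntitoneOn Φ (Icc r₁ z₁) := by
    apply antitoneOn_of_deriv_nonpos (convex_Icc r₁ z₁)
    · intro r hr
      exact ((hΦd r hr).continuousAt).continuousWithinAt
    · intro r hr
      rw [interior_Icc] at hr
      exact (hΦd r (Ioo_subset_Icc_self hr)).differentiableAt.differentiableWithinAt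
    · intro r hr
      rw [interior_Icc] at hr
      rw [(hΦd r (Ioo_subset_Icc_self hr)).deriv]
      exact hDle r (Ioo_subset_Icc_self hr)
  have hkey : Φ z₁ ≤ Φ r₁ :=
    hΦanti (left_mem_Icc.2 hr₁z.le) (right_mem_Icc.2 hr₁z.le) hr₁z.le
  have hG0 : G 0 = 0 := by simp [hGdef]
  rw [hΦdef] at hkey
  simp only [hur₁, huz₁, hG0, sub_zero, sub_self, mul_zero, add_zero] at hkey
  have hgoal : z₁ ^ (2 * (N - 1)) = z₁ ^ (n + 1) := by rw [hm]
  have hr₁pow : r₁ ^ (n + 1) = r₁ ^ n * r₁ := by ring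
  rw [hgoal]
  rw [hr₁pow] at hkey
  have : c * G β₁ = r₁ ^ n * (2 * ((N:ℝ) - 1) / K * G β₁) := by rw [hc]; ring
  rw [this] at hkey
  calc z₁ ^ (n + 1) * ((u' z₁) ^ 2 / 2 + F (u z₁))
      ≤ r₁ ^ n * r₁ * ((u' r₁) ^ 2 / 2 + F (u r₁)) - r₁ ^ n * (2 * ((N:ℝ) - 1) / K * G β₁) := by
        rw [huz₁, hur₁] at *; linarith
    _ = r₁ ^ n * (r₁ * ((u' r₁) ^ 2 / 2 + F (u r₁)) - 2 * ((N:ℝ) - 1) / K * G β₁) := by ring
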